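/- Let m and j be integers with 2 < j < m, and let r₁, r₂ ≥ 0 be integers such that every point of ℤ^{2^{m−1}} is at Manhattan distance at most r₁ from some point of Λ(m−1, j−1) and at Manhattan distance at most r₂ from some point of Λ(m−1, j). Then every point of ℤ^{2ᵐ} is at Manhattan distance at most r₁ + r₂ from some point of Λ(m, j). (In terms of covering radii: r(m, j) ≤ r(m−1, j−1) + r(m−1, j).) -/

import Mathlib

/-- `Hmat m` : the `2^m × 2^m` matrix defined by `H₀ = [1]` and
`H_{m+1} = [[Hₘ, Hₘ], [0, Hₘ]]` in block form. -/
def Hmat : (m : ℕ) → Matrix (Fin (2 ^ m)) (Fin (2 ^ m)) ℤ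
  | 0 => Matrix.of fun _ _ => 1
  | m + 1 =>
      Matrix.reindex
        (finSumFinEquiv.trans (finCongr (by rw [pow_succ, mul_two] :
          2 ^ m + 2 ^ m = 2 ^ (m + 1))))
        (finSumFinEquiv.trans (finCongr (by rw [pow_succ, mul_two] :
          2 ^ m + 2 ^ m = 2 ^ (m + 1))))
        (Matrix.fromBlocks (Hmat m) (Hmat m) 0 (Hmat m))

/-- `Smat m` : the `2^m × 2^m` Sylvester Hadamard matrix, `𝓗₀ = [1]`,
`𝓗_{m+1} = [[𝓗ₘ, 𝓗ₘ], [𝓗ₘ, −𝓗ₘ]]`. -/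
def Smat : (m : ℕ) → Matrix (Fin (2 ^ m)) (Fin (2 ^ m)) ℤ
  | 0 => Matrix.of fun _ _ => 1
  | m + 1 =>
      Matrix.reindex
        (finSumFinEquiv.trans (finCongr (by rw [pow_succ, mul_two] :
          2 ^ m + 2 ^ m = 2 ^ (m + 1))))
        (finSumFinEquiv.trans (finCongr (by rw [pow_succ, mul_two] :
          2 ^ m + 2 ^ m = 2 ^ (m + 1))))
        (Matrix.fromBlocks (Smat m) (Smat m) (Smat m) (-(Smat m)))

/-- Hamming weight of the `s`-th row of `Hmat m`. -/
def rowWeight (m : ℕ) (s : Fin (2 ^ m)) : ℕ :=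
  (Finset.univ.filter (fun t => Hmat m s t ≠ 0)).card

/-- `Gmat m j` : the matrix whose `s`-th row is the `s`-th row of `Hmat m`
multiplied by `2^(j − ℓ)` (truncated subtraction) where `2^ℓ` is the Hamming
weight of that row. -/
def Gmat (m j : ℕ) : Matrix (Fin (2 ^ m)) (Fin (2 ^ m)) ℤ :=
  Matrix.of fun s t => (2 : ℤ) ^ (j - Nat.log 2 (rowWeight m s)) * Hmat m s t

/-- The lattice generated by the rows of `G`. -/
def latticeOf {n : ℕ} (G : Matrix (Fin n) (Fin n) ℤ) : Set (Fin n → ℤ) :=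
  { x | ∃ u : Fin n → ℤ, x = Matrix.vecMul u G }

def Eqv (n : ℕ) : Fin (2 ^ n) ⊕ Fin (2 ^ n) ≃ Fin (2 ^ (n + 1)) :=
  finSumFinEquiv.trans (finCongr (by rw [pow_succ, mul_two]))

lemma Hmat_succ (n : ℕ) (p q : Fin (2 ^ n) ⊕ Fin (2 ^ n)) :
    Hmat (n + 1) (Eqv n p) (Eqv n q) =
      Matrix.fromBlocks (Hmat n) (Hmat n) 0 (Hmat n) p q := by
  show Matrix.reindex _ _ _ _ _ = _
  rw [Matrix.reindex_apply, Matrix.submatrix_apply]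
  congr 1 <;> exact Equiv.symm_apply_apply _ _

lemma Hmat_diag : ∀ (m : ℕ) (s : Fin (2 ^ m)), Hmat m s s = 1
  | 0, s => rfl
  | m + 1, s => by
    obtain ⟨p, rfl⟩ := (Eqv m).surjective s
    cases p with
    | inl t => rw [Hmat_succ]; exact Hmat_diag m t
    | inr t => rw [Hmat_succ]; exact Hmat_diag m t

lemma rowWeight_pos (m : ℕ) (s : Fin (2 ^ m)) : rowWeight m s ≠ 0 := by
  unfold rowWeight
  rw [Finset.card_ne_zero]
  exact ⟨s, by simp [Hmat_diag]⟩

lemma rowWeight_as_sum (m : ℕ) (s : Fin (2 ^ m)) :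
    rowWeight m s = ∑ t, if Hmat m s t ≠ 0 then 1 else 0 := by
  unfold rowWeight
  rw [Finset.card_filter]

lemma rowWeight_inl (n : ℕ) (s : Fin (2 ^ n)) :
    rowWeight (n + 1) (Eqv n (Sum.inl s)) = 2 * rowWeight n s := by
  rw [rowWeight_as_sum, ← Fintype.sum_equiv (Eqv n)
    (fun q => if Hmat (n+1) (Eqv n (Sum.inl s)) (Eqv n q) ≠ 0 then 1 else 0) _ (fun q => rfl)]
  simp only [Hmat_succ]
  rw [Fintype.sum_sum_type]
  simp [rowWeight_as_sum, two_mul]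
  congr 1 <;> exact Finset.sum_congr rfl fun _ _ => by split_ifs <;> simp_all

lemma rowWeight_inr (n : ℕ) (s : Fin (2 ^ n)) :
    rowWeight (n + 1) (Eqv n (Sum.inr s)) = rowWeight n s := by
  rw [rowWeight_as_sum, ← Fintype.sum_equiv (Eqv n)
    (fun q => if Hmat (n+1) (Eqv n (Sum.inr s)) (Eqv n q) ≠ 0 then 1 else 0) _ (fun q => rfl)]
  simp only [Hmat_succ]
  rw [Fintype.sum_sum_type]
  simp [rowWeight_as_sum]
  exact Finset.sum_congr rfl fun _ _ => by split_ifs <;> simp_all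

lemma Gmat_succ (n j : ℕ) (p q : Fin (2 ^ n) ⊕ Fin (2 ^ n)) :
    Gmat (n + 1) j (Eqv n p) (Eqv n q) =
      Matrix.fromBlocks (Gmat n (j-1)) (Gmat n (j-1)) 0 (Gmat n j) p q := by
  have key : ∀ s : Fin (2 ^ n),
      j - Nat.log 2 (rowWeight (n+1) (Eqv n (Sum.inl s))) = (j - 1) - Nat.log 2 (rowWeight n s) := by
    intro s
    rw [rowWeight_inl, mul_comm, Nat.log_mul_base one_lt_two (rowWeight_pos n s)]
    omega
  cases p with
  | inl s =>
    cases q with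
    | inl t =>
      show (2:ℤ) ^ _ * Hmat (n+1) (Eqv n (Sum.inl s)) (Eqv n (Sum.inl t)) = _
      rw [Hmat_succ, key]; rfl
    | inr t =>
      show (2:ℤ) ^ _ * Hmat (n+1) (Eqv n (Sum.inl s)) (Eqv n (Sum.inr t)) = _
      rw [Hmat_succ, key]; rfl
  | inr s =>
    cases q with
    | inl t =>
      show (2:ℤ) ^ _ * Hmat (n+1) (Eqv n (Sum.inr s)) (Eqv n (Sum.inl t)) = _
      rw [Hmat_succ]; simp
    | inr t =>
      show (2:ℤ) ^ _ * Hmat (n+1) (Eqv n (Sum.inr s)) (Eqv n (Sum.inr t)) = _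
      rw [Hmat_succ, rowWeight_inr]; rfl

lemma vecMul_Gmat_succ (n j : ℕ) (u₁ u₂ : Fin (2 ^ n) → ℤ) (q : Fin (2 ^ n) ⊕ Fin (2 ^ n)) :
    Matrix.vecMul (fun s => Sum.elim u₁ u₂ ((Eqv n).symm s)) (Gmat (n + 1) j) (Eqv n q) =
      Sum.elim (Matrix.vecMul u₁ (Gmat n (j-1)))
        (Matrix.vecMul u₁ (Gmat n (j-1)) + Matrix.vecMul u₂ (Gmat n j)) q := by
  show (∑ s, Sum.elim u₁ u₂ ((Eqv n).symm s) * Gmat (n+1) j s (Eqv n q)) = _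
  rw [← Fintype.sum_equiv (Eqv n)
    (fun p => Sum.elim u₁ u₂ ((Eqv n).symm (Eqv n p)) * Gmat (n+1) j (Eqv n p) (Eqv n q))
    _ (fun p => rfl)]
  simp only [Equiv.symm_apply_apply, Gmat_succ]
  rw [Fintype.sum_sum_type]
  cases q with
  | inl t => simp [Matrix.vecMul, dotProduct]
  | inr t => simp [Matrix.vecMul, dotProduct]

/-- Covering-radius recursion for `Λ(m, j)`, `2 < j < m`: if every point of
`ℤ^{2^{m−1}}` is at Manhattan distance at most `r₁` from `Λ(m−1, j−1)` and at
Manhattan distance at most `r₂` from `Λ(m−1, j)`, then every point of `ℤ^{2^m}`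
is at Manhattan distance at most `r₁ + r₂` from `Λ(m, j)`. -/
theorem covering_radius_Gmj_recursion (m j : ℕ) (hj : 2 < j) (hjm : j < m)
    (r₁ r₂ : ℕ)
    (hr₁ : ∀ x : Fin (2 ^ (m - 1)) → ℤ,
      ∃ c ∈ latticeOf (Gmat (m - 1) (j - 1)), (∑ i, |x i - c i|) ≤ (r₁ : ℤ))
    (hr₂ : ∀ x : Fin (2 ^ (m - 1)) → ℤ,
      ∃ c ∈ latticeOf (Gmat (m - 1) j), (∑ i, |x i - c i|) ≤ (r₂ : ℤ)) :
    ∀ x : Fin (2 ^ m) → ℤ,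
      ∃ c ∈ latticeOf (Gmat m j), (∑ i, |x i - c i|) ≤ (r₁ : ℤ) + (r₂ : ℤ) := by
  obtain ⟨n, rfl⟩ : ∃ n, m = n + 1 := ⟨m - 1, by omega⟩
  intro x
  obtain ⟨a, ⟨u₁, rfl⟩, ha⟩ := hr₁ (fun t => x (Eqv n (Sum.inl t)))
  obtain ⟨b, ⟨u₂, rfl⟩, hb⟩ := hr₂
    (fun t => x (Eqv n (Sum.inr t)) - Matrix.vecMul u₁ (Gmat n (j-1)) t)
  refine ⟨Matrix.vecMul (fun s => Sum.elim u₁ u₂ ((Eqv n).symm s)) (Gmat (n+1) j),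
    ⟨_, rfl⟩, ?_⟩
  rw [← Fintype.sum_equiv (Eqv n)
    (fun q => |x (Eqv n q) -
      Matrix.vecMul (fun s => Sum.elim u₁ u₂ ((Eqv n).symm s)) (Gmat (n+1) j) (Eqv n q)|)
    _ (fun q => rfl)]
  simp only [vecMul_Gmat_succ]
  rw [Fintype.sum_sum_type]
  have h2 : (∑ t, |x (Eqv n (Sum.inr t)) -
      (Matrix.vecMul u₁ (Gmat n (j-1)) + Matrix.vecMul u₂ (Gmat n j)) t|) ≤ (r₂ : ℤ) := by
    refine le_trans (le_of_eq (Finset.sum_congr rfl fun t _ => ?_)) hb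
    simp only [Pi.add_apply]
    rw [sub_add_eq_sub_sub]
    exact rfl
  calc _ ≤ (r₁ : ℤ) + (r₂ : ℤ) := add_le_add ha h2
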